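/- arXiv:2108.05225 — 4 statements merged into one kernel-verified Lean document; each statement's English description precedes it below -/
import Mathlib

section
/- Let Γ = (ℤ/4ℤ) × (ℤ/4ℤ) and define q : Γ → ℂˣ by q(s,t) = i^{s̃ t̃}, where s̃, t̃ ∈ {0,1,2,3} are the representatives of s and t (this is well defined since i⁴ = 1). Then the set of group automorphisms f of Γ satisfying q ∘ f = q consists of exactly the four automorphisms id, −id, κ and −κ, where κ(s,t) = (t,s) is the coordinate swap and −id is negation. In particular this automorphism group is isomorphic to ℤ/2ℤ × ℤ/2ℤ. -/
/-- The imaginary unit `i` as a unit of `ℂ`. -/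
noncomputable def iUnit : ℂˣ := Units.mk0 Complex.I Complex.I_ne_zero

/-- The quadratic form `q(s,t) = i^(s̃ t̃)` on `Γ = ℤ/4 × ℤ/4`, where `s̃, t̃ ∈ {0,1,2,3}`
are the canonical representatives of `s` and `t`. -/
noncomputable def q0 (p : ZMod 4 × ZMod 4) : ℂˣ := iUnit ^ (p.1.val * p.2.val)

/-- The group structure (composition) that `AddAut` carried in the older Mathlib. -/
instance : Group (AddAut (ZMod 4 × ZMod 4)) where
  mul g h := AddEquiv.trans h g
  one := AddEquiv.refl _
  inv := AddEquiv.symm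
  mul_assoc _ _ _ := rfl
  one_mul _ := rfl
  mul_one _ := rfl
  inv_mul_cancel := AddEquiv.self_trans_symm

/-- The group of (additive) automorphisms of `Γ = ℤ/4 × ℤ/4` preserving `q0`. -/
def qAut : Subgroup (AddAut (ZMod 4 × ZMod 4)) where
  carrier := {f | ∀ x, q0 (f x) = q0 x}
  one_mem' := fun _ => rfl
  mul_mem' := by
    intro f g hf hg x
    have h : (f * g) x = f (g x) := rfl
    rw [h, hf, hg]
  inv_mem' := by
    intro f hf x
    have h := hf (f⁻¹ x)
    rw [show f (f⁻¹ x) = x from f.apply_symm_apply x] at h; exact h.symm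

/-- The coordinate-swap automorphism `κ(s,t) = (t,s)` of `ℤ/4 × ℤ/4`. -/
def swapAut : AddAut (ZMod 4 × ZMod 4) :=
  (AddEquiv.prodComm : ZMod 4 × ZMod 4 ≃+ ZMod 4 × ZMod 4)

/-- The negation automorphism `−id` of `ℤ/4 × ℤ/4`. -/
def negAut : AddAut (ZMod 4 × ZMod 4) := AddEquiv.neg (ZMod 4 × ZMod 4)

lemma orderOf_iUnit : orderOf iUnit = 4 := by
  have h4 : iUnit ^ 4 = 1 := by
    ext; simp [iUnit, pow_succ, Complex.I_mul_I]
  have h2 : iUnit ^ 2 ≠ 1 := by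
    intro h
    have := congrArg Units.val h
    simp [iUnit, pow_succ, Complex.I_mul_I] at this
    norm_num at this
  have hd : orderOf iUnit ∣ 4 := orderOf_dvd_of_pow_eq_one h4
  have hle : orderOf iUnit ≤ 4 := Nat.le_of_dvd (by norm_num) hd
  have hpow := pow_orderOf_eq_one iUnit
  interval_cases h : orderOf iUnit <;> first
    | rfl
    | exact absurd hpow h2
    | (exfalso; apply h2; rw [pow_one] at hpow; rw [hpow, one_pow])
    | norm_num at hd

lemma iUnit_pow_eq (m n : ℕ) : iUnit ^ m = iUnit ^ n ↔ (m : ZMod 4) = n := by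
  rw [pow_eq_pow_iff_modEq, orderOf_iUnit, ← ZMod.natCast_eq_natCast_iff]

lemma q0_eq_iff (x y : ZMod 4 × ZMod 4) : q0 y = q0 x ↔ y.1 * y.2 = x.1 * x.2 := by
  rw [q0, q0, iUnit_pow_eq]
  push_cast [ZMod.natCast_val, ZMod.cast_id]
  rfl

abbrev Γ4 := ZMod 4 × ZMod 4

lemma mem_qAut_iff (f : AddAut Γ4) :
    f ∈ qAut ↔ ∀ x : Γ4, (f x).1 * (f x).2 = x.1 * x.2 := by
  constructor <;> intro h x <;> have := h x
  · rwa [q0_eq_iff] at this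
  · rwa [q0_eq_iff]

lemma neg_mem : negAut ∈ qAut := by
  rw [mem_qAut_iff]; decide

lemma swap_mem : swapAut ∈ qAut := by
  rw [mem_qAut_iff]; intro x; exact mul_comm _ _

lemma negswap_mem : negAut * swapAut ∈ qAut := mul_mem neg_mem swap_mem

lemma autNe {f g : AddAut Γ4} (x : Γ4) (h : f x ≠ g x) : f ≠ g :=
  fun he => h (by rw [he])

lemma one_ne_neg : (1 : AddAut Γ4) ≠ negAut := autNe (1,0) (by decide)
lemma one_ne_swap : (1 : AddAut Γ4) ≠ swapAut := autNe (1,0) (by decide)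
lemma one_ne_negswap : (1 : AddAut Γ4) ≠ negAut * swapAut := autNe (1,0) (by decide)

lemma neg_ne_swap : negAut ≠ swapAut := autNe (1,0) (by decide)
lemma neg_ne_negswap : negAut ≠ negAut * swapAut := autNe (1,0) (by decide)
lemma swap_ne_negswap : swapAut ≠ negAut * swapAut := autNe (1,0) (by decide)

lemma gen_decomp : ∀ x : Γ4, x = x.1.val • ((1,0) : Γ4) + x.2.val • ((0,1) : Γ4) := by decide

lemma key : ∀ a b : Γ4,
    (∀ x : Γ4,
      (x.1.val • a + x.2.val • b).1 * (x.1.val • a + x.2.val • b).2 = x.1 * x.2) →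
    (a = (1,0) ∧ b = (0,1)) ∨ (a = (3,0) ∧ b = (0,3)) ∨
    (a = (0,1) ∧ b = (1,0)) ∨ (a = (0,3) ∧ b = (3,0)) := by decide

lemma classify {f : AddAut Γ4} (hf : f ∈ qAut) :
    f = 1 ∨ f = negAut ∨ f = swapAut ∨ f = negAut * swapAut := by
  rw [mem_qAut_iff] at hf
  have hdec : ∀ x : Γ4, f x = x.1.val • f (1,0) + x.2.val • f (0,1) := by
    intro x
    conv_lhs => rw [gen_decomp x]
    rw [map_add, map_nsmul, map_nsmul]
  have hf' : ∀ x : Γ4,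
      (x.1.val • f (1,0) + x.2.val • f (0,1)).1 * (x.1.val • f (1,0) + x.2.val • f (0,1)).2
        = x.1 * x.2 := by
    intro x; rw [← hdec]; exact hf x
  rcases key _ _ hf' with ⟨h1, h2⟩ | ⟨h1, h2⟩ | ⟨h1, h2⟩ | ⟨h1, h2⟩
  · left
    ext x : 1
    rw [hdec x, h1, h2]
    revert x; decide
  · right; left
    ext x : 1
    rw [hdec x, h1, h2]
    show _ = -x
    revert x; decide
  · right; right; left
    ext x : 1
    rw [hdec x, h1, h2]
    show _ = (x.2, x.1)
    revert x; decide
  · right; right; right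
    ext x : 1
    rw [hdec x, h1, h2]
    show _ = -(x.2, x.1)
    revert x; decide

noncomputable def N : qAut := ⟨negAut, neg_mem⟩
noncomputable def S : qAut := ⟨swapAut, swap_mem⟩

lemma NN : N * N = 1 := by
  apply Subtype.ext
  show negAut * negAut = 1
  ext x : 1
  show negAut (negAut x) = x
  revert x; decide

lemma SS : S * S = 1 := by
  apply Subtype.ext
  show swapAut * swapAut = 1
  ext x : 1
  show swapAut (swapAut x) = x
  revert x; decide

lemma SN : S * N = N * S := by
  apply Subtype.ext
  show swapAut * negAut = negAut * swapAut
  ext x : 1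
  show swapAut (negAut x) = negAut (swapAut x)
  revert x; decide

lemma pow_val_add {G : Type*} [Group G] (g : G) (hg : g * g = 1) (a b : ZMod 2) :
    g ^ (a + b).val = g ^ a.val * g ^ b.val := by
  have h01 : ∀ c : ZMod 2, c = 0 ∨ c = 1 := by decide
  rcases h01 a with rfl | rfl <;> rcases h01 b with rfl | rfl <;>
    simp only [show ((0:ZMod 2)+0).val = 0 from rfl, show ((0:ZMod 2)+1).val = 1 from rfl,
      show ((1:ZMod 2)+0).val = 1 from rfl, show ((1:ZMod 2)+1).val = 0 from rfl,
      show (0:ZMod 2).val = 0 from rfl, show (1:ZMod 2).val = 1 from rfl,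
      pow_zero, pow_one, one_mul, mul_one, hg]

noncomputable def toHom : Multiplicative (ZMod 2 × ZMod 2) →* qAut where
  toFun p := N ^ (p.toAdd.1.val) * S ^ (p.toAdd.2.val)
  map_one' := by simp
  map_mul' p q := by
    show N ^ ((p.toAdd.1 + q.toAdd.1).val) * S ^ ((p.toAdd.2 + q.toAdd.2).val) =
      (N ^ (p.toAdd.1.val) * S ^ (p.toAdd.2.val)) * (N ^ (q.toAdd.1.val) * S ^ (q.toAdd.2.val))
    have hc : Commute S N := SN
    rw [pow_val_add N NN, pow_val_add S SS, mul_assoc, mul_assoc]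
    congr 1
    rw [← mul_assoc, ← mul_assoc, hc.pow_pow]

lemma N_ne_one : N ≠ 1 := fun h => one_ne_neg (congrArg Subtype.val h).symm
lemma S_ne_one : S ≠ 1 := fun h => one_ne_swap (congrArg Subtype.val h).symm
lemma NS_ne_one : N * S ≠ 1 := fun h => one_ne_negswap (congrArg Subtype.val h).symm

lemma toHom_bij : Function.Bijective toHom := by
  constructor
  · rw [injective_iff_map_eq_one]
    intro p hp
    have hval : toHom p = N ^ (p.toAdd.1.val) * S ^ (p.toAdd.2.val) := rfl
    fin_cases p <;> rw [hval] at hp <;>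
      simp only [show (0:ZMod 2).val = 0 from rfl, show (1:ZMod 2).val = 1 from rfl,
        pow_zero, pow_one, one_mul, mul_one] at hp <;>
      first
        | rfl
        | exact absurd hp N_ne_one
        | exact absurd hp S_ne_one
        | exact absurd hp NS_ne_one
  · rintro ⟨f, hf⟩
    have hval : ∀ p, toHom p = N ^ (p.toAdd.1.val) * S ^ (p.toAdd.2.val) := fun _ => rfl
    rcases classify hf with h | h | h | h
    · exact ⟨1, by rw [map_one]; exact (Subtype.ext h).symm⟩
    · refine ⟨Multiplicative.ofAdd (1, 0), ?_⟩
      rw [hval]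
      simp only [toAdd_ofAdd, show (0:ZMod 2).val = 0 from rfl,
        show (1:ZMod 2).val = 1 from rfl, pow_zero, pow_one, mul_one]
      exact (Subtype.ext h).symm
    · refine ⟨Multiplicative.ofAdd (0, 1), ?_⟩
      rw [hval]
      simp only [toAdd_ofAdd, show (0:ZMod 2).val = 0 from rfl,
        show (1:ZMod 2).val = 1 from rfl, pow_zero, pow_one, one_mul]
      exact (Subtype.ext h).symm
    · refine ⟨Multiplicative.ofAdd (1, 1), ?_⟩
      rw [hval]
      simp only [toAdd_ofAdd, show (1:ZMod 2).val = 1 from rfl, pow_one]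
      exact (Subtype.ext h).symm

/-- The automorphisms of `Γ = ℤ/4 × ℤ/4` preserving `q(s,t) = i^{s̃t̃}` are
exactly `id`, `−id`, `κ` and `−κ`, and this group is isomorphic to `ℤ/2 × ℤ/2`. -/
theorem stmt0 :
    (qAut : Set (AddAut (ZMod 4 × ZMod 4))) = {1, negAut, swapAut, negAut * swapAut} ∧
    Nonempty (qAut ≃* Multiplicative (ZMod 2 × ZMod 2)) := by
  constructor
  · ext f
    simp only [SetLike.mem_coe, Set.mem_insert_iff, Set.mem_singleton_iff]
    constructor
    · exact fun hf => classify hf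
    · rintro (rfl | rfl | rfl | rfl)
      · exact one_mem qAut
      · exact neg_mem
      · exact swap_mem
      · exact negswap_mem
  · exact ⟨(MulEquiv.ofBijective toHom toHom_bij).symm⟩
end

section
/- Let G be an abelian group generated by two elements, and let ω : G × G × G → ℂˣ be a 3-cocycle for the trivial G-action on ℂˣ, i.e. ω(y,z,w)·ω(x, y z, w)·ω(x,y,z) = ω(x y, z, w)·ω(x, y, z w) for all x,y,z,w ∈ G. Define φ*(ω)(x,y,z) = ω(x,y,z)ω(y,z,x)ω(z,x,y) / (ω(y,x,z)ω(x,z,y)ω(z,y,x)). Then φ*(ω)(x,y,z) = 1 for all x, y, z ∈ G. -/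
private def phiAux {G : Type*} (ω : G → G → G → ℂˣ) (x y z : G) : ℂˣ :=
  ω x y z * ω y z x * ω z x y * (ω y x z)⁻¹ * (ω x z y)⁻¹ * (ω z y x)⁻¹

private lemma phiAux_cyclic {G : Type*} (ω : G → G → G → ℂˣ) (x y z : G) :
    phiAux ω x y z = phiAux ω y z x := by
  simp only [phiAux]
  rw [Units.ext_iff]; push_cast; field_simp; try ring

private lemma phiAux_swap {G : Type*} (ω : G → G → G → ℂˣ) (x y z : G) :
    phiAux ω y x z = (phiAux ω x y z)⁻¹ := by
  simp only [phiAux]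
  rw [Units.ext_iff]; push_cast; field_simp; try ring

private lemma phiAux_diag12 {G : Type*} (ω : G → G → G → ℂˣ) (x z : G) :
    phiAux ω x x z = 1 := by
  simp only [phiAux]
  rw [Units.ext_iff]; push_cast; field_simp; try ring

private lemma phiAux_diag13 {G : Type*} (ω : G → G → G → ℂˣ) (x y : G) :
    phiAux ω x y x = 1 := by
  simp only [phiAux]
  rw [Units.ext_iff]; push_cast; field_simp; try ring

private lemma phiAux_diag23 {G : Type*} (ω : G → G → G → ℂˣ) (x y : G) :
    phiAux ω x y y = 1 := by
  simp only [phiAux]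
  rw [Units.ext_iff]; push_cast; field_simp; try ring

set_option maxHeartbeats 1000000 in
private lemma phiAux_mul_left {G : Type*} [CommGroup G] (ω : G → G → G → ℂˣ)
    (hc : ∀ x y z w : G,
      ω y z w * ω x (y * z) w * ω x y z = ω (x * y) z w * ω x y (z * w))
    (x x' y z : G) :
    phiAux ω (x * x') y z = phiAux ω x y z * phiAux ω x' y z := by
  have h1 := hc z y x' x
  have h2 := hc z x' y x
  have h3 := hc z x' x y
  have h4 := hc y z x' x
  have h5 := hc y x' z x
  have h6 := hc y x' x z
  have h7 := hc x' z y x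
  have h8 := hc x' z x y
  have h9 := hc x' y z x
  have h10 := hc x' y x z
  have h11 := hc x' x z y
  have h12 := hc x' x y z
  simp only [mul_comm x' x, mul_comm y x, mul_comm y x', mul_comm z x, mul_comm z x',
    mul_comm z y] at h1 h2 h3 h4 h5 h6 h7 h8 h9 h10 h11 h12
  have key : ((ω (x * x') y z * ω y z (x * x') * ω z (x * x') y) * ((ω y x z * ω x z y * ω z y x) * (ω y x' z * ω x' z y * ω z y x'))) *
      ((ω (y * z) x' x * ω z y (x * x')) *
        (ω x' y x * ω z (x' * y) x * ω z x' y) *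
        (ω (x' * z) x y * ω z x' (x * y)) *
        (ω z x' x * ω y (x' * z) x * ω y z x') *
        (ω (x' * y) z x * ω y x' (x * z)) *
        (ω x' x z * ω y (x * x') z * ω y x' x) *
        (ω (x' * z) y x * ω x' z (x * y)) *
        (ω z x y * ω x' (x * z) y * ω x' z x) *
        (ω y z x * ω x' (y * z) x * ω x' y z) *
        (ω (x' * y) x z * ω x' y (x * z)) *
        (ω (x * x') z y * ω x' x (y * z)) *
        (ω x y z * ω x' (x * y) z * ω x' x y)) =
      ((ω y (x * x') z * ω (x * x') z y * ω z y (x * x')) * ((ω x y z * ω y z x * ω z x y) * (ω x' y z * ω y z x' * ω z x' y))) *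
      ((ω y x' x * ω z (x' * y) x * ω z y x') *
        (ω (x' * z) y x * ω z x' (x * y)) *
        (ω x' x y * ω z (x * x') y * ω z x' x) *
        (ω (y * z) x' x * ω y z (x * x')) *
        (ω x' z x * ω y (x' * z) x * ω y x' z) *
        (ω (x' * y) x z * ω y x' (x * z)) *
        (ω z y x * ω x' (y * z) x * ω x' z y) *
        (ω (x' * z) x y * ω x' z (x * y)) *
        (ω (x' * y) z x * ω x' y (x * z)) *
        (ω y x z * ω x' (x * y) z * ω x' y x) *
        (ω x z y * ω x' (x * z) y * ω x' x z) *
        (ω (x * x') y z * ω x' x (y * z))) := by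
    rw [Units.ext_iff]
    push_cast
    ring
  have hU : ((ω y x' x * ω z (x' * y) x * ω z y x') *
        (ω (x' * z) y x * ω z x' (x * y)) *
        (ω x' x y * ω z (x * x') y * ω z x' x) *
        (ω (y * z) x' x * ω y z (x * x')) *
        (ω x' z x * ω y (x' * z) x * ω y x' z) *
        (ω (x' * y) x z * ω y x' (x * z)) *
        (ω z y x * ω x' (y * z) x * ω x' z y) *
        (ω (x' * z) x y * ω x' z (x * y)) *
        (ω (x' * y) z x * ω x' y (x * z)) *
        (ω y x z * ω x' (x * y) z * ω x' y x) *
        (ω x z y * ω x' (x * z) y * ω x' x z) *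
        (ω (x * x') y z * ω x' x (y * z))) =
      ((ω (y * z) x' x * ω z y (x * x')) *
        (ω x' y x * ω z (x' * y) x * ω z x' y) *
        (ω (x' * z) x y * ω z x' (x * y)) *
        (ω z x' x * ω y (x' * z) x * ω y z x') *
        (ω (x' * y) z x * ω y x' (x * z)) *
        (ω x' x z * ω y (x * x') z * ω y x' x) *
        (ω (x' * z) y x * ω x' z (x * y)) *
        (ω z x y * ω x' (x * z) y * ω x' z x) *
        (ω y z x * ω x' (y * z) x * ω x' y z) *
        (ω (x' * y) x z * ω x' y (x * z)) *
        (ω (x * x') z y * ω x' x (y * z)) *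
        (ω x y z * ω x' (x * y) z * ω x' x y)) :=
    (congrArg₂ (· * ·) (congrArg₂ (· * ·) (congrArg₂ (· * ·) (congrArg₂ (· * ·) (congrArg₂ (· * ·) (congrArg₂ (· * ·) (congrArg₂ (· * ·) (congrArg₂ (· * ·) (congrArg₂ (· * ·) (congrArg₂ (· * ·) (congrArg₂ (· * ·) h1 h2.symm) h3) h4.symm) h5) h6.symm) h7) h8.symm) h9.symm) h10) h11) h12.symm)
  have key3 : ((ω (x * x') y z * ω y z (x * x') * ω z (x * x') y) * ((ω y x z * ω x z y * ω z y x) * (ω y x' z * ω x' z y * ω z y x'))) = ((ω y (x * x') z * ω (x * x') z y * ω z y (x * x')) * ((ω x y z * ω y z x * ω z x y) * (ω x' y z * ω y z x' * ω z x' y))) :=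
    mul_right_cancel (key.trans (congrArg₂ (· * ·) (Eq.refl ((ω y (x * x') z * ω (x * x') z y * ω z y (x * x')) * ((ω x y z * ω y z x * ω z x y) * (ω x' y z * ω y z x' * ω z x' y)))) hU))
  have hphi : ∀ p q r : G, phiAux ω p q r =
      (ω p q r * ω q r p * ω r p q) / (ω q p r * ω p r q * ω r q p) := by
    intro p q r
    simp only [phiAux]
    rw [Units.ext_iff]
    push_cast
    field_simp
    try ring
  rw [hphi, hphi, hphi, div_mul_div_comm, div_eq_div_iff_mul_eq_mul, key3]
  exact mul_comm _ _


private lemma phiAux_mul_mid {G : Type*} [CommGroup G] (ω : G → G → G → ℂˣ)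
    (hc : ∀ x y z w : G,
      ω y z w * ω x (y * z) w * ω x y z = ω (x * y) z w * ω x y (z * w))
    (x y y' z : G) :
    phiAux ω x (y * y') z = phiAux ω x y z * phiAux ω x y' z := by
  rw [phiAux_cyclic ω x (y * y') z, phiAux_cyclic ω x y z, phiAux_cyclic ω x y' z,
    phiAux_mul_left ω hc y y' z x]

private lemma phiAux_mul_right {G : Type*} [CommGroup G] (ω : G → G → G → ℂˣ)
    (hc : ∀ x y z w : G,
      ω y z w * ω x (y * z) w * ω x y z = ω (x * y) z w * ω x y (z * w))
    (x y z z' : G) :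
    phiAux ω x y (z * z') = phiAux ω x y z * phiAux ω x y z' := by
  rw [phiAux_cyclic ω x y (z * z'), phiAux_cyclic ω y (z * z') x,
    phiAux_cyclic ω x y z, phiAux_cyclic ω y z x,
    phiAux_cyclic ω x y z', phiAux_cyclic ω y z' x,
    phiAux_mul_left ω hc z z' x y]

private lemma hom_eq_one {G : Type*} [CommGroup G] {a b : G}
    (hgen : Subgroup.closure ({a, b} : Set G) = ⊤) (f : G →* ℂˣ)
    (ha : f a = 1) (hb : f b = 1) (z : G) : f z = 1 := by
  have hle : Subgroup.closure ({a, b} : Set G) ≤ f.ker := by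
    rw [Subgroup.closure_le]
    intro g hg
    rcases Set.mem_insert_iff.mp hg with rfl | hg
    · simpa [MonoidHom.mem_ker] using ha
    · rcases Set.mem_singleton_iff.mp hg with rfl
      simpa [MonoidHom.mem_ker] using hb
  have hz : z ∈ f.ker := hle (by rw [hgen]; exact Subgroup.mem_top z)
  exact MonoidHom.mem_ker.mp hz

/-- For an abelian group `G` generated by two elements and a 3-cocycle
`ω : G³ → ℂˣ` (trivial action), the total antisymmetrization
`φ*(ω)(x,y,z) = ω(x,y,z)ω(y,z,x)ω(z,x,y)·(ω(y,x,z)ω(x,z,y)ω(z,y,x))⁻¹` is identically `1`. -/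
theorem stmt1 {G : Type*} [CommGroup G] (a b : G)
    (hgen : Subgroup.closure ({a, b} : Set G) = ⊤)
    (ω : G → G → G → ℂˣ)
    (hcocycle : ∀ x y z w : G,
      ω y z w * ω x (y * z) w * ω x y z = ω (x * y) z w * ω x y (z * w)) :
    ∀ x y z : G,
      ω x y z * ω y z x * ω z x y * (ω y x z)⁻¹ * (ω x z y)⁻¹ * (ω z y x)⁻¹ = 1 := by
  have step1 : ∀ z : G, phiAux ω a b z = 1 :=
    hom_eq_one hgen (MonoidHom.mk' (fun w => phiAux ω a b w)
      (fun w w' => phiAux_mul_right ω hcocycle a b w w'))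
      (phiAux_diag13 ω a b) (phiAux_diag23 ω a b)
  have step1' : ∀ z : G, phiAux ω b a z = 1 := by
    intro z
    rw [phiAux_swap ω a b z, step1 z, inv_one]
  have step2 : ∀ z y : G, phiAux ω a y z = 1 := fun z =>
    hom_eq_one hgen (MonoidHom.mk' (fun y => phiAux ω a y z)
      (fun y y' => phiAux_mul_mid ω hcocycle a y y' z))
      (phiAux_diag12 ω a z) (step1 z)
  have step2' : ∀ z y : G, phiAux ω b y z = 1 := fun z =>
    hom_eq_one hgen (MonoidHom.mk' (fun y => phiAux ω b y z)
      (fun y y' => phiAux_mul_mid ω hcocycle b y y' z))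
      (step1' z) (phiAux_diag12 ω b z)
  have step3 : ∀ y z x : G, phiAux ω x y z = 1 := fun y z =>
    hom_eq_one hgen (MonoidHom.mk' (fun x => phiAux ω x y z)
      (fun x x' => phiAux_mul_left ω hcocycle x x' y z))
      (step2 z y) (step2' z y)
  intro x y z
  exact step3 y z x
end

section
/- Let G and Γ be finite abelian groups with |Γ| = |G|², let Ĝ = Hom(G, ℂˣ) denote the character group of G, let b : Γ × Γ → ℂˣ be a nondegenerate symmetric bicharacter, and let i : Ĝ → Γ be an injective group homomorphism whose image is isotropic, i.e. b(i(χ), i(χ')) = 1 for all χ, χ' ∈ Ĝ. Then the map p̃ : Γ → Hom(Ĝ, ℂˣ) defined by p̃(x)(χ) = b(i(χ), x) is a surjective group homomorphism whose kernel is exactly i(Ĝ). Consequently, there is a short exact sequence 1 → Ĝ → Γ → G → 1, and Γ / i(Ĝ) is isomorphic to G. -/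
/-- Duality for finite abelian groups: the character group `A →* ℂˣ` is (noncanonically)
isomorphic to `A`. -/
lemma dual_mulEquiv (A : Type*) [CommGroup A] [Finite A] :
    Nonempty ((A →* ℂˣ) ≃* A) := by
  haveI : NeZero ((Monoid.exponent A : ℂ)) :=
    ⟨by exact_mod_cast Monoid.exponent_ne_zero_of_finite⟩
  exact CommGroup.monoidHom_mulEquiv_of_hasEnoughRootsOfUnity A ℂ

/-- A subgroup contained in another of the same (finite) cardinality equals it. -/
lemma subgroup_eq_of_le_of_card_eq {Γ : Type*} [Group Γ] {H K : Subgroup Γ}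
    [Finite K] (hle : H ≤ K) (hc : Nat.card H = Nat.card K) : H = K := by
  have hbij : Function.Bijective (Subgroup.inclusion hle) := by
    rw [Nat.bijective_iff_injective_and_card]
    exact ⟨Subgroup.inclusion_injective hle, hc⟩
  ext x
  refine ⟨fun hx => hle hx, fun hx => ?_⟩
  obtain ⟨⟨y, hy⟩, hyx⟩ := hbij.2 ⟨x, hx⟩
  have : y = x := congrArg Subtype.val hyx
  exact this ▸ hy

/-- Let `G`, `Γ` be finite abelian groups with `|Γ| = |G|²`, `b` a nondegenerate
symmetric bicharacter on `Γ`, and `i : Ĝ → Γ` an injective homomorphism with isotropic image.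
Then `p̃ : Γ → Hom(Ĝ, ℂˣ)`, `p̃(x)(χ) = b(i(χ), x)`, is surjective with kernel `i(Ĝ)`;
consequently `1 → Ĝ → Γ → G → 1` is exact and `Γ / i(Ĝ) ≅ G`. -/
theorem stmt3 {G : Type*} [CommGroup G] [Finite G] {Γ : Type*} [CommGroup Γ] [Finite Γ]
    (hcard : Nat.card Γ = Nat.card G ^ 2)
    (b : Γ → Γ → ℂˣ)
    (hb_left : ∀ x y z : Γ, b (x * y) z = b x z * b y z)
    (hb_right : ∀ x y z : Γ, b x (y * z) = b x y * b x z)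
    (hsymm : ∀ x y : Γ, b x y = b y x)
    (hnd : ∀ x : Γ, (∀ y : Γ, b x y = 1) → x = 1)
    (i : (G →* ℂˣ) →* Γ)
    (hinj : Function.Injective i)
    (hiso : ∀ χ χ' : G →* ℂˣ, b (i χ) (i χ') = 1) :
    (∀ φ : (G →* ℂˣ) →* ℂˣ, ∃ x : Γ, ∀ χ : G →* ℂˣ, b (i χ) x = φ χ) ∧
    (∀ x : Γ, (∀ χ : G →* ℂˣ, b (i χ) x = 1) ↔ x ∈ i.range) ∧
    Nonempty ((Γ ⧸ i.range) ≃* G) := by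
  classical
  -- basic bicharacter facts
  have hb1 : ∀ z : Γ, b 1 z = 1 := by
    intro z
    have h := hb_left 1 1 z
    rw [one_mul] at h
    exact mul_left_cancel (a := b 1 z) (by rw [mul_one, ← h])
  have hb1' : ∀ z : Γ, b z 1 = 1 := fun z => (hsymm z 1).trans (hb1 z)
  -- the map β : Γ → Hom(Γ, ℂˣ), x ↦ b(·, x)
  let β : Γ →* (Γ →* ℂˣ) :=
    { toFun := fun x =>
        { toFun := fun y => b y x
          map_one' := hb1 x
          map_mul' := fun y z => hb_left y z x }
      map_one' := MonoidHom.ext fun y => hb1' y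
      map_mul' := fun x₁ x₂ => MonoidHom.ext fun y => hb_right y x₁ x₂ }
  -- restriction along i
  let r : (Γ →* ℂˣ) →* ((G →* ℂˣ) →* ℂˣ) :=
    { toFun := fun φ => φ.comp i
      map_one' := MonoidHom.one_comp i
      map_mul' := fun φ ψ => MonoidHom.mul_comp φ ψ i }
  let p : Γ →* ((G →* ℂˣ) →* ℂˣ) := r.comp β
  have hp : ∀ (x : Γ) (χ : G →* ℂˣ), p x χ = b (i χ) x := fun _ _ => rfl
  -- duality card facts
  obtain ⟨eΓ⟩ := dual_mulEquiv Γ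
  haveI finΓd : Finite (Γ →* ℂˣ) := Finite.of_equiv _ eΓ.symm.toEquiv
  have cardΓd : Nat.card (Γ →* ℂˣ) = Nat.card Γ := Nat.card_congr eΓ.toEquiv
  obtain ⟨eG⟩ := dual_mulEquiv G
  haveI finGd : Finite (G →* ℂˣ) := Finite.of_equiv _ eG.symm.toEquiv
  have cardGd : Nat.card (G →* ℂˣ) = Nat.card G := Nat.card_congr eG.toEquiv
  obtain ⟨eGG⟩ := dual_mulEquiv (G →* ℂˣ)
  haveI finGdd : Finite ((G →* ℂˣ) →* ℂˣ) := Finite.of_equiv _ eGG.symm.toEquiv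
  have cardGdd : Nat.card ((G →* ℂˣ) →* ℂˣ) = Nat.card G :=
    (Nat.card_congr eGG.toEquiv).trans cardGd
  have hG0 : 0 < Nat.card G := Nat.card_pos
  -- β is bijective
  have hβinj : Function.Injective β := by
    intro x y hxy
    have h1 : β (x * y⁻¹) = 1 := by rw [map_mul, hxy, map_inv, mul_inv_cancel]
    have h2 : x * y⁻¹ = 1 := by
      refine hnd _ fun z => ?_
      have h3 : b z (x * y⁻¹) = 1 := DFunLike.congr_fun h1 z
      exact (hsymm (x * y⁻¹) z).trans h3
    exact mul_inv_eq_one.mp h2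
  have hβbij : Function.Bijective β :=
    (Nat.bijective_iff_injective_and_card β).mpr ⟨hβinj, cardΓd.symm⟩
  -- card of i.range
  have cardH : Nat.card i.range = Nat.card G := by
    rw [← cardGd]
    exact (Nat.card_congr (MonoidHom.ofInjective hinj).toEquiv).symm
  -- card of the quotient Γ ⧸ i.range
  have cardQ : Nat.card (Γ ⧸ i.range) = Nat.card G := by
    have h := (Subgroup.card_eq_card_quotient_mul_card_subgroup i.range).symm
    rw [hcard, cardH, sq] at h
    exact Nat.eq_of_mul_eq_mul_right hG0 h
  -- kernel of r is in bijection with characters of the quotient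
  have kerr_card : Nat.card r.ker = Nat.card G := by
    have e : ((Γ ⧸ i.range) →* ℂˣ) ≃ r.ker :=
      { toFun := fun ψ =>
          ⟨ψ.comp (QuotientGroup.mk' i.range), by
            have : (ψ.comp (QuotientGroup.mk' i.range)).comp i = 1 := by
              ext χ
              simp only [MonoidHom.comp_apply, QuotientGroup.mk'_apply, MonoidHom.one_apply]
              rw [show ((i χ : Γ) : Γ ⧸ i.range) = 1 from
                (QuotientGroup.eq_one_iff _).mpr ⟨χ, rfl⟩, map_one]
            exact this⟩
        invFun := fun φ =>
          QuotientGroup.lift i.range φ.1 (by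
            rintro x ⟨χ, rfl⟩
            exact DFunLike.congr_fun φ.2 χ)
        left_inv := fun ψ => by
          ext x
          rfl
        right_inv := fun φ => by
          ext x
          rfl }
    rw [← Nat.card_congr e]
    obtain ⟨eQ⟩ := dual_mulEquiv (Γ ⧸ i.range)
    rw [Nat.card_congr eQ.toEquiv, cardQ]
  -- ker p has the same cardinality as ker r, via the bijection β
  have kerp_card : Nat.card p.ker = Nat.card G := by
    have e : (p.ker : Set Γ) ≃ (r.ker : Set (Γ →* ℂˣ)) :=
      Equiv.subtypeEquiv (Equiv.ofBijective β hβbij) (fun x => by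
        simp only [Equiv.ofBijective_apply, SetLike.mem_coe, MonoidHom.mem_ker]
        exact Iff.rfl)
    rw [← kerr_card]
    exact Nat.card_congr e
  -- i.range ≤ ker p, hence equality by cardinality
  have hle : i.range ≤ p.ker := by
    rintro x ⟨χ', rfl⟩
    rw [MonoidHom.mem_ker]
    exact MonoidHom.ext fun χ => hiso χ χ'
  have hker : i.range = p.ker :=
    subgroup_eq_of_le_of_card_eq hle (by rw [cardH, kerp_card])
  -- p is surjective by cardinality count
  have hpsurj : Function.Surjective p := by
    rw [← MonoidHom.range_eq_top]
    apply Subgroup.eq_top_of_card_eq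
    have h1 : Nat.card (Γ ⧸ p.ker) = Nat.card p.range :=
      Nat.card_congr (QuotientGroup.quotientKerEquivRange p).toEquiv
    have h2 : Nat.card (Γ ⧸ p.ker) = Nat.card G := by
      rw [← Nat.card_congr (QuotientGroup.quotientMulEquivOfEq hker).toEquiv]
      exact cardQ
    rw [← h1, h2, cardGdd]
  refine ⟨?_, ?_, ?_⟩
  · intro φ
    obtain ⟨x, hx⟩ := hpsurj φ
    exact ⟨x, fun χ => DFunLike.congr_fun hx χ⟩
  · intro x
    rw [hker, MonoidHom.mem_ker]
    constructor
    · intro h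
      exact MonoidHom.ext fun χ => h χ
    · intro h χ
      exact DFunLike.congr_fun h χ
  · exact ⟨((QuotientGroup.quotientMulEquivOfEq hker).trans
      (QuotientGroup.quotientKerEquivOfSurjective p hpsurj)).trans (eGG.trans eG)⟩
end

section
/- Let Γ be a finite abelian group (written multiplicatively) and q : Γ → ℂˣ a quadratic form, i.e. q(x⁻¹) = q(x) for all x and the map b(x,y) := q(xy) q(x)⁻¹ q(y)⁻¹ is a bicharacter; assume b is nondegenerate. Let H be a subgroup of Γ with q(h) = 1 for all h ∈ H, and set H^⊥ = { x ∈ Γ : b(x,h) = 1 for all h ∈ H }. Then: (i) H ⊆ H^⊥; (ii) q is constant on each coset xH with x ∈ H^⊥, so q induces a well-defined map q'' : H^⊥/H → ℂˣ; (iii) q'' is a quadratic form on H^⊥/H whose associated bicharacter is nondegenerate. -/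
lemma aux_sum_zero {G : Type*} [CommGroup G] [Fintype G] (f : G → ℂˣ)
    (hf : ∀ a c : G, f (a * c) = f a * f c) (a : G) (ha : f a ≠ 1) :
    ∑ g : G, (f g : ℂ) = 0 := by
  have key : (f a : ℂ) * ∑ g : G, (f g : ℂ) = ∑ g : G, (f g : ℂ) := by
    rw [Finset.mul_sum]
    calc ∑ g : G, (f a : ℂ) * (f g : ℂ) = ∑ g : G, (f (a * g) : ℂ) := by
          simp [hf]
      _ = ∑ g : G, (f g : ℂ) := Equiv.sum_comp (Equiv.mulLeft a) (fun g => (f g : ℂ))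
  have hne : (f a : ℂ) ≠ 1 := fun h => ha (Units.ext h)
  have := sub_eq_zero.mpr key
  rw [← sub_one_mul] at this
  rcases mul_eq_zero.mp this with h | h
  · exact absurd (by linear_combination h) hne
  · exact h

def perpSub {Γ : Type*} [CommGroup Γ] (b : Γ → Γ → ℂˣ)
    (hb_left : ∀ x y z : Γ, b (x * y) z = b x z * b y z) (K : Subgroup Γ) : Subgroup Γ where
  carrier := {x : Γ | ∀ k ∈ K, b x k = 1}
  one_mem' := by
    intro k hk
    have h1 := hb_left 1 1 k
    rw [mul_one] at h1
    exact left_eq_mul.mp h1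
  mul_mem' := by
    intro x y hx hy k hk
    rw [hb_left, hx k hk, hy k hk, mul_one]
  inv_mem' := by
    intro x hx k hk
    have h1 : b 1 k = 1 := by
      have h1 := hb_left 1 1 k
      rw [mul_one] at h1
      exact left_eq_mul.mp h1
    have h2 := hb_left x x⁻¹ k
    rw [mul_inv_cancel, h1, hx k hk, one_mul] at h2
    exact h2.symm

lemma mem_perpSub {Γ : Type*} [CommGroup Γ] (b : Γ → Γ → ℂˣ)
    (hb_left : ∀ x y z : Γ, b (x * y) z = b x z * b y z) (K : Subgroup Γ) (x : Γ) :
    x ∈ perpSub b hb_left K ↔ ∀ k ∈ K, b x k = 1 := Iff.rfl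

lemma card_perp {Γ : Type*} [CommGroup Γ] [Fintype Γ] (b : Γ → Γ → ℂˣ)
    (hb_left : ∀ x y z : Γ, b (x * y) z = b x z * b y z)
    (hb_right : ∀ x y z : Γ, b x (y * z) = b x y * b x z)
    (hnd' : ∀ k : Γ, k ≠ 1 → ∃ x : Γ, b x k ≠ 1)
    (K : Subgroup Γ) :
    Nat.card (perpSub b hb_left K) * Nat.card K = Nat.card Γ := by
  classical
  set P := perpSub b hb_left K with hP
  have hbone : ∀ x : Γ, b x 1 = 1 := by
    intro x
    have h1 := hb_right x 1 1
    rw [mul_one] at h1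
    exact left_eq_mul.mp h1
  have h1 : ∀ x : Γ, ∑ k : K, (b x k : ℂ) = if x ∈ P then (Nat.card K : ℂ) else 0 := by
    intro x
    by_cases hx : x ∈ P
    · rw [if_pos hx]
      have : ∀ k : K, (b x k : ℂ) = 1 := fun k => by rw [hx k k.2]; simp
      rw [Finset.sum_congr rfl (fun k _ => this k), Finset.sum_const, Finset.card_univ,
        Nat.card_eq_fintype_card]
      simp
    · rw [if_neg hx]
      rw [mem_perpSub] at hx
      push_neg at hx
      obtain ⟨k, hk, hbk⟩ := hx
      exact aux_sum_zero (fun k : K => b x k)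
        (fun a c => by rw [← hb_right]; rfl) ⟨k, hk⟩ hbk
  have h2 : ∀ k : Γ, ∑ x : Γ, (b x k : ℂ) = if k = 1 then (Nat.card Γ : ℂ) else 0 := by
    intro k
    by_cases hk : k = 1
    · subst hk
      rw [if_pos rfl]
      simp [hbone, Nat.card_eq_fintype_card]
    · rw [if_neg hk]
      obtain ⟨x, hx⟩ := hnd' k hk
      exact aux_sum_zero (fun x : Γ => b x k) (fun a c => hb_left a c k) x hx
  have key : ((Nat.card P : ℂ)) * (Nat.card K : ℂ) = (Nat.card Γ : ℂ) := by
    calc (Nat.card P : ℂ) * (Nat.card K : ℂ)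
        = ∑ x : Γ, (if x ∈ P then (Nat.card K : ℂ) else 0) := by
          rw [← Finset.sum_filter, Finset.sum_const]
          rw [Nat.card_eq_fintype_card (α := ↥P), Fintype.card_subtype]
          simp [mul_comm]
      _ = ∑ x : Γ, ∑ k : K, (b x k : ℂ) := by
          exact Finset.sum_congr rfl fun x _ => (h1 x).symm
      _ = ∑ k : K, ∑ x : Γ, (b x k : ℂ) := Finset.sum_comm
      _ = ∑ k : K, (if (k : Γ) = 1 then (Nat.card Γ : ℂ) else 0) :=
          Finset.sum_congr rfl fun k _ => h2 k
      _ = (Nat.card Γ : ℂ) := by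
          rw [Finset.sum_eq_single (1 : K)]
          · simp
          · intro k _ hk
            rw [if_neg (fun h => hk (by exact_mod_cast OneMemClass.coe_eq_one.mp h))]
          · simp
  exact_mod_cast key

/-- Let `q` be a quadratic form on a finite abelian group `Γ` with nondegenerate
associated bicharacter `b(x,y) = q(xy)q(x)⁻¹q(y)⁻¹`, and let `H ≤ Γ` with `q|_H = 1`.
Then (i) `H ⊆ H^⊥`; (ii) `q` is constant on cosets `xH` for `x ∈ H^⊥`; (iii) `q` induces a
quadratic form `q''` on `H^⊥/H` whose associated bicharacter is nondegenerate. -/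
theorem stmt4 {Γ : Type*} [CommGroup Γ] [Fintype Γ]
    (q : Γ → ℂˣ) (hqinv : ∀ x : Γ, q x⁻¹ = q x)
    (b : Γ → Γ → ℂˣ) (hb : ∀ x y : Γ, b x y = q (x * y) * (q x)⁻¹ * (q y)⁻¹)
    (hb_left : ∀ x y z : Γ, b (x * y) z = b x z * b y z)
    (hb_right : ∀ x y z : Γ, b x (y * z) = b x y * b x z)
    (hnd : ∀ x : Γ, (∀ y : Γ, b x y = 1) → x = 1)
    (H : Subgroup Γ) (hH : ∀ h ∈ H, q h = 1)
    (Hperp : Subgroup Γ) (hHperp : (Hperp : Set Γ) = {x : Γ | ∀ h ∈ H, b x h = 1}) :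
    H ≤ Hperp ∧
    (∀ x ∈ Hperp, ∀ h ∈ H, q (x * h) = q x) ∧
    (∃ q'' : (Hperp ⧸ H.subgroupOf Hperp) → ℂˣ,
      (∀ x : Hperp, q'' (QuotientGroup.mk x) = q (x : Γ)) ∧
      (∀ y : Hperp ⧸ H.subgroupOf Hperp, q'' y⁻¹ = q'' y) ∧
      (∀ y z w : Hperp ⧸ H.subgroupOf Hperp,
        q'' ((y * z) * w) * (q'' (y * z))⁻¹ * (q'' w)⁻¹ =
          (q'' (y * w) * (q'' y)⁻¹ * (q'' w)⁻¹) * (q'' (z * w) * (q'' z)⁻¹ * (q'' w)⁻¹)) ∧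
      (∀ y z w : Hperp ⧸ H.subgroupOf Hperp,
        q'' (y * (z * w)) * (q'' y)⁻¹ * (q'' (z * w))⁻¹ =
          (q'' (y * z) * (q'' y)⁻¹ * (q'' z)⁻¹) * (q'' (y * w) * (q'' y)⁻¹ * (q'' w)⁻¹)) ∧
      (∀ y : Hperp ⧸ H.subgroupOf Hperp,
        (∀ z : Hperp ⧸ H.subgroupOf Hperp, q'' (y * z) * (q'' y)⁻¹ * (q'' z)⁻¹ = 1) → y = 1)) := by
  classical
  have hsymm : ∀ x y : Γ, b x y = b y x := by
    intro x y
    rw [hb x y, hb y x, mul_comm x y, mul_right_comm]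
  have hmemperp : ∀ x : Γ, x ∈ Hperp ↔ ∀ h ∈ H, b x h = 1 := by
    intro x
    rw [← SetLike.mem_coe, hHperp]
    exact Iff.rfl
  have key : ∀ a c : Γ, q (a * c) * (q a)⁻¹ * (q c)⁻¹ = b a c := fun a c => (hb a c).symm
  -- (i)
  have hi : H ≤ Hperp := by
    intro h hh
    rw [hmemperp]
    intro h' hh'
    rw [hb, hH h hh, hH h' hh', hH (h * h') (mul_mem hh hh')]
    simp
  -- (ii)
  have hii : ∀ x ∈ Hperp, ∀ h ∈ H, q (x * h) = q x := by
    intro x hx h hh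
    have h1 := hb x h
    rw [(hmemperp x).mp hx h hh, hH h hh, inv_one, mul_one] at h1
    exact mul_inv_eq_one.mp h1.symm
  refine ⟨hi, hii, ?_⟩
  -- the quotient form
  set Q := H.subgroupOf Hperp with hQ
  have hwd : ∀ a c : Hperp, @Setoid.r _ (QuotientGroup.leftRel Q) a c → q (a : Γ) = q (c : Γ) := by
    intro a c hac
    rw [QuotientGroup.leftRel_apply] at hac
    have : (c : Γ) = (a : Γ) * ((a⁻¹ * c : Hperp) : Γ) := by
      push_cast
      group
    rw [this, hii (a : Γ) a.2 _ (Subgroup.mem_subgroupOf.mp hac)]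
  refine ⟨fun y => Quotient.liftOn' y (fun x : Hperp => q (x : Γ)) hwd, fun x => rfl, ?_, ?_, ?_, ?_⟩
  · -- inverse
    intro y
    obtain ⟨x, rfl⟩ := QuotientGroup.mk_surjective y
    show q (((x⁻¹ : Hperp) : Γ)) = q ((x : Γ))
    push_cast
    exact hqinv _
  · -- bicharacter in first variable
    intro y z w
    obtain ⟨x, rfl⟩ := QuotientGroup.mk_surjective y
    obtain ⟨x', rfl⟩ := QuotientGroup.mk_surjective z
    obtain ⟨x'', rfl⟩ := QuotientGroup.mk_surjective w
    show q (((x * x' * x'' : Hperp) : Γ)) * (q ((x * x' : Hperp) : Γ))⁻¹ * (q ((x'' : Hperp) : Γ))⁻¹ =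
      (q ((x * x'' : Hperp) : Γ) * (q (x : Γ))⁻¹ * (q (x'' : Γ))⁻¹) *
      (q ((x' * x'' : Hperp) : Γ) * (q (x' : Γ))⁻¹ * (q (x'' : Γ))⁻¹)
    push_cast
    rw [key, key, key]
    exact hb_left _ _ _
  · -- bicharacter in second variable
    intro y z w
    obtain ⟨x, rfl⟩ := QuotientGroup.mk_surjective y
    obtain ⟨x', rfl⟩ := QuotientGroup.mk_surjective z
    obtain ⟨x'', rfl⟩ := QuotientGroup.mk_surjective w
    show q (((x * (x' * x'') : Hperp) : Γ)) * (q (x : Γ))⁻¹ * (q ((x' * x'' : Hperp) : Γ))⁻¹ =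
      (q ((x * x' : Hperp) : Γ) * (q (x : Γ))⁻¹ * (q (x' : Γ))⁻¹) *
      (q ((x * x'' : Hperp) : Γ) * (q (x : Γ))⁻¹ * (q (x'' : Γ))⁻¹)
    push_cast
    rw [key, key, key]
    exact hb_right _ _ _
  · -- nondegeneracy
    intro y hy
    obtain ⟨x, rfl⟩ := QuotientGroup.mk_surjective y
    have hx : ∀ z : Hperp, b (x : Γ) (z : Γ) = 1 := by
      intro z
      have := hy (QuotientGroup.mk z)
      rw [show (QuotientGroup.mk x * QuotientGroup.mk z : Hperp ⧸ Q) =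
        QuotientGroup.mk (x * z) from rfl] at this
      have h2 : q (((x * z : Hperp) : Γ)) * (q (x : Γ))⁻¹ * (q (z : Γ))⁻¹ = 1 := this
      rw [show ((x * z : Hperp) : Γ) = (x : Γ) * (z : Γ) from rfl, key] at h2
      exact h2
    -- counting: H = (H^⊥)^⊥
    have hnd' : ∀ k : Γ, k ≠ 1 → ∃ x : Γ, b x k ≠ 1 := by
      intro k hk
      by_contra hc
      push_neg at hc
      exact hk (hnd k (fun y => by rw [hsymm]; exact hc y))
    have hHperp_eq : Hperp = perpSub b hb_left H := by
      ext x
      rw [hmemperp, mem_perpSub]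
    have c1 : Nat.card Hperp * Nat.card H = Nat.card Γ := by
      rw [hHperp_eq]
      exact card_perp b hb_left hb_right hnd' H
    have c2 : Nat.card (perpSub b hb_left Hperp) * Nat.card Hperp = Nat.card Γ :=
      card_perp b hb_left hb_right hnd' Hperp
    have hle : H ≤ perpSub b hb_left Hperp := by
      intro h hh
      rw [mem_perpSub]
      intro k hk
      rw [hsymm]
      exact (hmemperp k).mp hk h hh
    have hcard : Nat.card (perpSub b hb_left Hperp) = Nat.card H := by
      have hpos : 0 < Nat.card Hperp := Nat.card_pos
      apply Nat.eq_of_mul_eq_mul_right hpos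
      rw [c2, ← c1, mul_comm]
    have heq : H = perpSub b hb_left Hperp := by
      rw [← SetLike.coe_set_eq]
      apply Set.eq_of_subset_of_ncard_le hle
      rw [← Nat.card_coe_set_eq, ← Nat.card_coe_set_eq]
      simp only [SetLike.coe_sort_coe]
      rw [hcard]
    have hxH : (x : Γ) ∈ H := by
      rw [heq, mem_perpSub]
      intro k hk
      exact hx ⟨k, hk⟩
    rw [QuotientGroup.eq_one_iff]
    exact Subgroup.mem_subgroupOf.mpr hxH
end
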